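/- ℓ₁ is not weak Rudin–Keisler reducible to I_wf: there is no infinite set A ⊆ 2^{<ω} and function f : A → ℕ such that for every X ⊆ ℕ, X ∈ ℓ₁ if and only if f⁻¹[X] ∈ I_wf. -/

import Mathlib

/-- The summable ideal `ℓ₁ = {X ⊆ ℕ : ∑_{n ∈ X} 1/(n+1) < ∞}`. -/
def ell1 : Set (Set ℕ) := {X | Summable (fun n : X => (1 : ℝ) / ((n : ℕ) + 1))}

/-- The length-`n` initial segment of an infinite binary sequence, as a binary string. -/
def initSeg (y : ℕ → Bool) (n : ℕ) : List Bool := List.ofFn (fun i : Fin n => y i)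

/-- `[X]`: the set of infinite branches hitting `X` infinitely often. -/
def branches (X : Set (List Bool)) : Set (ℕ → Bool) :=
  {y | ∀ N : ℕ, ∃ n ≥ N, initSeg y n ∈ X}

/-- The ideal of well-founded sets of binary strings: `X` with `[X] = ∅`. -/
def Iwf : Set (Set (List Bool)) := {X | branches X = ∅}

/-- Weak Rudin–Keisler reducibility: there is an infinite `B' ⊆ B` and `f : B' → A`
such that `X ∈ I ↔ f⁻¹[X] ∈ J` for all `X ⊆ A`. -/
def wRK {A B : Type*} (I : Set (Set A)) (J : Set (Set B)) : Prop :=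
  ∃ (B' : Set B) (f : B' → A), B'.Infinite ∧
    ∀ X : Set A, X ∈ I ↔ (Subtype.val '' (f ⁻¹' X)) ∈ J

lemma not_summable_one_div_succ : ¬ Summable (fun n : ℕ => (1 : ℝ) / (n + 1)) := by
  intro h
  apply Real.not_summable_one_div_natCast
  apply (summable_nat_add_iff 1).mp
  convert h using 2 with n
  case e'_3 => rfl
  push_cast
  ring

/-- `ℓ₁` is not weak Rudin–Keisler reducible to `I_wf`. -/
theorem ell1_not_wRK_Iwf : ¬ wRK ell1 Iwf := by
  rintro ⟨B', f, hInf, hiff⟩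
  -- `ℕ ∉ ℓ₁` since the harmonic series diverges
  have huniv : (Set.univ : Set ℕ) ∉ ell1 := by
    intro h
    apply not_summable_one_div_succ
    have h2 : Summable ((fun n : ℕ => (1 : ℝ) / (n + 1)) ∘ (Subtype.val : ↥(Set.univ : Set ℕ) → ℕ)) := h
    rw [summable_subtype_iff_indicator, Set.indicator_univ] at h2
    exact h2
  -- hence `B' ∉ I_wf`, giving a branch `y` through `B'`
  have himg : Subtype.val '' (f ⁻¹' (Set.univ : Set ℕ)) = B' := by
    simp
  have hB' : ¬ branches B' = ∅ := by
    intro h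
    exact huniv ((hiff Set.univ).mpr (by rw [Set.preimage_univ] at himg ⊢; rw [himg]; exact h))
  obtain ⟨y, hy⟩ := Set.nonempty_iff_ne_empty.mpr hB'
  have hy : ∀ N : ℕ, ∃ n ≥ N, initSeg y n ∈ B' := hy
  -- key: any `X` whose `f`-preimage contains infinitely many initial segments of `y`
  -- cannot be in `ℓ₁`
  have key : ∀ X : Set ℕ,
      (∀ N, ∃ n ≥ N, ∃ h : initSeg y n ∈ B', f ⟨initSeg y n, h⟩ ∈ X) → X ∉ ell1 := by
    intro X hX hXe
    have hwf : branches (Subtype.val '' (f ⁻¹' X)) = ∅ := (hiff X).mp hXe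
    have hy' : y ∈ branches (Subtype.val '' (f ⁻¹' X)) := by
      intro N
      obtain ⟨n, hn, h, hfx⟩ := hX N
      exact ⟨n, hn, ⟨⟨_, h⟩, hfx, rfl⟩⟩
    rw [hwf] at hy'
    exact hy'
  -- the set of values of `f` along the branch `y`
  set V : Set ℕ := {m | ∃ n, ∃ h : initSeg y n ∈ B', f ⟨initSeg y n, h⟩ = m} with hVdef
  by_cases hV : V.Finite
  · -- finite set of values: `V ∈ ℓ₁`, contradiction
    apply key V
    · intro N
      obtain ⟨n, hn, h⟩ := hy N
      exact ⟨n, hn, h, n, h, rfl⟩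
    · have := hV.to_subtype
      exact Summable.of_finite
  · -- infinitely many values: extract a sparse summable subset
    have hVinf : V.Infinite := hV
    have hVinf' : (setOf (· ∈ V)).Infinite := hVinf
    set g : ℕ → ℕ := fun k => Nat.nth (· ∈ V) (2 ^ k) with hgdef
    have hgV : ∀ k, g k ∈ V := fun k => Nat.nth_mem_of_infinite hVinf' (2 ^ k)
    have hglb : ∀ k, 2 ^ k ≤ g k := fun k => (Nat.nth_strictMono hVinf').id_le (2 ^ k)
    have hginj : Function.Injective g := by
      intro k₁ k₂ h
      have := (Nat.nth_strictMono hVinf').injective h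
      exact Nat.pow_right_injective (le_refl 2) this
    set X : Set ℕ := Set.range g with hXdef
    -- `X ∈ ℓ₁` by comparison with a geometric series
    have hXe : X ∈ ell1 := by
      have hsum : Summable (fun k : ℕ => (1 : ℝ) / (g k + 1)) := by
        apply Summable.of_nonneg_of_le (fun k => by positivity) _ summable_geometric_two
        intro k
        rw [div_pow, one_pow]
        apply one_div_le_one_div_of_le (by positivity)
        calc ((2 : ℝ) ^ k) = ((2 ^ k : ℕ) : ℝ) := by push_cast; ring
          _ ≤ (g k : ℝ) := by exact_mod_cast hglb k
          _ ≤ (g k : ℝ) + 1 := by linarith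
      have hcomp : ((fun x : X => (1 : ℝ) / ((x : ℕ) + 1)) ∘ (Equiv.ofInjective g hginj))
          = fun k : ℕ => (1 : ℝ) / (g k + 1) := by
        funext k
        simp [Equiv.ofInjective_apply]
      exact (Equiv.ofInjective g hginj).summable_iff.mp (by rw [hcomp]; exact hsum)
    -- but `X` is hit by infinitely many initial segments of `y`
    apply key X _ hXe
    have hgV' : ∀ k, ∃ n, ∃ h : initSeg y n ∈ B', f ⟨initSeg y n, h⟩ = g k := hgV
    choose t ht hft using hgV'
    have htinj : Function.Injective t := by
      intro k₁ k₂ h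
      apply hginj
      rw [← hft k₁, ← hft k₂]
      have heq : (⟨initSeg y (t k₁), ht k₁⟩ : B') = ⟨initSeg y (t k₂), ht k₂⟩ := by
        apply Subtype.ext
        show initSeg y (t k₁) = initSeg y (t k₂)
        rw [h]
      rw [heq]
    have hT : Set.Infinite {n | ∃ h : initSeg y n ∈ B', f ⟨initSeg y n, h⟩ ∈ X} := by
      apply Set.infinite_of_injective_forall_mem htinj
      intro k
      exact ⟨ht k, by rw [hft k]; exact Set.mem_range_self k⟩
    intro N
    obtain ⟨n, hnT, hlt⟩ := hT.exists_gt N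
    exact ⟨n, le_of_lt hlt, hnT⟩
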